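/- Fix K ∈ ℝ, N > 1 and t ∈ [0,1]. Then, as λ → 0⁺, the distortion coefficient τ_{K,N}^{(t)}(λ) admits the Taylor expansion τ_{K,N}^{(t)}(λ) = t(1 + (1−t²)(K/(6N))λ²) + o(λ²); that is, (τ_{K,N}^{(t)}(λ) − t − t(1−t²)(K/(6N))λ²)/λ² → 0 as λ → 0⁺. -/

import Mathlib

/-- Distortion coefficient `σ_Λ^{(t)}(θ)`. -/
noncomputable def sigmaCoeff (Λ t θ : ℝ) : ℝ :=
  if Λ * θ ^ 2 = 0 then t
  else if 0 < Λ * θ ^ 2 then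
    Real.sin (t * (θ * Real.sqrt Λ)) / Real.sin (θ * Real.sqrt Λ)
  else
    Real.sinh (t * (θ * Real.sqrt (-Λ))) / Real.sinh (θ * Real.sqrt (-Λ))

/-- Distortion coefficient `τ_{K,N}^{(t)}(θ) = t^{1/N} (σ_{K/(N-1)}^{(t)}(θ))^{1-1/N}`. -/
noncomputable def tauCoeff (K N t θ : ℝ) : ℝ :=
  t ^ (1 / N) * (sigmaCoeff (K / (N - 1)) t θ) ^ (1 - 1 / N)

open Real Filter Set Asymptotics Topology

lemma aux_sinh_bound {x : ℝ} (hx : |x| ≤ 1) :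
    |Real.sinh x - (x + x ^ 3 / 6)| ≤ |x| ^ 4 * (5 / 96) := by
  have h1 := Real.exp_bound hx (n := 4) (by norm_num)
  have h2 := Real.exp_bound (x := -x) (by rwa [abs_neg]) (n := 4) (by norm_num)
  have e1 : ∑ m ∈ Finset.range 4, x ^ m / (m.factorial : ℝ) = 1 + x + x^2/2 + x^3/6 := by
    norm_num [Finset.sum_range_succ, Nat.factorial]
  have e2 : ∑ m ∈ Finset.range 4, (-x) ^ m / (m.factorial : ℝ) = 1 - x + x^2/2 - x^3/6 := by
    norm_num [Finset.sum_range_succ, Nat.factorial]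
    ring
  rw [e1] at h1
  rw [e2, abs_neg] at h2
  have hc : (((4:ℕ).succ : ℝ)) / (((4:ℕ).factorial : ℝ) * ((4:ℕ):ℝ)) = 5 / 96 := by
    norm_num [Nat.factorial]
  rw [hc] at h1 h2
  have hs : Real.sinh x - (x + x ^ 3 / 6)
      = ((Real.exp x - (1 + x + x^2/2 + x^3/6)) - (Real.exp (-x) - (1 - x + x^2/2 - x^3/6))) / 2 := by
    rw [Real.sinh_eq]; ring
  rw [hs]
  calc |((Real.exp x - (1 + x + x^2/2 + x^3/6)) - (Real.exp (-x) - (1 - x + x^2/2 - x^3/6))) / 2|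
      ≤ (|Real.exp x - (1 + x + x^2/2 + x^3/6)| + |Real.exp (-x) - (1 - x + x^2/2 - x^3/6)|) / 2 := by
        rw [abs_div, abs_two]; gcongr ?_ / 2; exact abs_sub _ _
    _ ≤ (|x| ^ 4 * (5/96) + |x| ^ 4 * (5/96)) / 2 := by gcongr
    _ = |x| ^ 4 * (5/96) := by ring

lemma aux_tendsto_div_sin : Tendsto (fun θ : ℝ => θ / Real.sin θ) (𝓝[>] 0) (𝓝 1) := by
  have h : HasDerivAt Real.sin 1 0 := by simpa using Real.hasDerivAt_sin 0
  have h2 : Tendsto (fun x : ℝ => Real.sin x / x) (𝓝[≠] 0) (𝓝 1) := by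
    have := hasDerivAt_iff_tendsto_slope.mp h
    refine this.congr fun x => ?_
    simp [slope_def_field, div_eq_div_iff]
  have h3 : Tendsto (fun x : ℝ => Real.sin x / x) (𝓝[>] 0) (𝓝 1) :=
    h2.mono_left (nhdsWithin_mono _ fun x hx => ne_of_gt hx)
  simpa [inv_div] using h3.inv₀ one_ne_zero

lemma aux_tendsto_div_sinh : Tendsto (fun θ : ℝ => θ / Real.sinh θ) (𝓝[>] 0) (𝓝 1) := by
  have h : HasDerivAt Real.sinh 1 0 := by simpa using Real.hasDerivAt_sinh 0
  have h2 : Tendsto (fun x : ℝ => Real.sinh x / x) (𝓝[≠] 0) (𝓝 1) := by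
    have := hasDerivAt_iff_tendsto_slope.mp h
    refine this.congr fun x => ?_
    simp [slope_def_field, div_eq_div_iff]
  have h3 : Tendsto (fun x : ℝ => Real.sinh x / x) (𝓝[>] 0) (𝓝 1) :=
    h2.mono_left (nhdsWithin_mono _ fun x hx => ne_of_gt hx)
  simpa [inv_div] using h3.inv₀ one_ne_zero

lemma aux_core (f : ℝ → ℝ) (a t : ℝ) (ht0 : 0 ≤ t) (ht1 : t ≤ 1)
    (hb : ∀ x : ℝ, |x| ≤ 1 → |f x - (x + a * x ^ 3 / 6)| ≤ |x| ^ 4 * (5/96)) :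
    Tendsto (fun θ : ℝ => (f (t * θ) - t * f θ) / θ ^ 3) (𝓝[>] 0) (𝓝 (a * (t^3 - t) / 6)) := by
  rw [← tendsto_sub_nhds_zero_iff]
  refine squeeze_zero_norm' (a := fun θ : ℝ => (5/48) * θ) ?_ ?_
  · filter_upwards [Ioc_mem_nhdsGT_of_mem (Set.left_mem_Ico.mpr zero_lt_one)] with θ hθ
    obtain ⟨hθ0, hθ1⟩ := hθ
    have habs : |θ| ≤ 1 := by rw [abs_of_pos hθ0]; exact hθ1
    have htθ : |t * θ| ≤ 1 := by
      rw [abs_of_nonneg (mul_nonneg ht0 hθ0.le)]; nlinarith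
    have hA := hb _ htθ
    have hB := hb _ habs
    have key : (f (t * θ) - t * f θ) / θ ^ 3 - a * (t^3 - t) / 6
        = ((f (t*θ) - (t*θ + a*(t*θ)^3/6)) - t*(f θ - (θ + a*θ^3/6))) / θ^3 := by
      field_simp
      ring
    rw [Real.norm_eq_abs, key, abs_div, abs_of_pos (pow_pos hθ0 3),
      div_le_iff₀ (pow_pos hθ0 3)]
    have ht4 : t^4 ≤ 1 := pow_le_one₀ ht0 ht1
    calc |(f (t*θ) - (t*θ + a*(t*θ)^3/6)) - t*(f θ - (θ + a*θ^3/6))|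
        ≤ |f (t*θ) - (t*θ + a*(t*θ)^3/6)| + |t*(f θ - (θ + a*θ^3/6))| := abs_sub _ _
      _ = |f (t*θ) - (t*θ + a*(t*θ)^3/6)| + t * |f θ - (θ + a*θ^3/6)| := by
          rw [abs_mul, abs_of_nonneg ht0]
      _ ≤ |t*θ|^4*(5/96) + t*(|θ|^4*(5/96)) := by gcongr
      _ ≤ 5/48*θ*θ^3 := by
          rw [abs_of_nonneg (mul_nonneg ht0 hθ0.le), abs_of_pos hθ0]
          nlinarith [pow_nonneg hθ0.le 4,
            mul_nonneg (by nlinarith : (0:ℝ) ≤ 2 - t^4 - t) (pow_nonneg hθ0.le 4)]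
  · have : Tendsto (fun θ : ℝ => (5/48 : ℝ) * θ) (𝓝 0) (𝓝 ((5/48) * 0)) :=
      (continuous_const.mul continuous_id).tendsto 0
    simpa using this.mono_left nhdsWithin_le_nhds

lemma aux_sigma (Λ t : ℝ) (ht0 : 0 ≤ t) (ht1 : t ≤ 1) :
    Tendsto (fun l : ℝ => (sigmaCoeff Λ t l - t) / l ^ 2) (𝓝[>] 0)
      (𝓝 (t * (1 - t ^ 2) * Λ / 6)) := by
  rcases lt_trichotomy Λ 0 with hΛ | rfl | hΛ
  · -- Λ < 0
    set s := Real.sqrt (-Λ) with hs_def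
    have hs : 0 < s := Real.sqrt_pos.mpr (by linarith)
    have hs2 : s ^ 2 = -Λ := Real.sq_sqrt (by linarith)
    have hφ : Tendsto (fun l : ℝ => l * s) (𝓝[>] 0) (𝓝[>] 0) := by
      apply tendsto_nhdsWithin_of_tendsto_nhds_of_eventually_within
      · have : Tendsto (fun l : ℝ => l * s) (𝓝 0) (𝓝 (0 * s)) :=
          (continuous_id.mul continuous_const).tendsto 0
        simpa using this.mono_left nhdsWithin_le_nhds
      · filter_upwards [self_mem_nhdsWithin] with l hl
        exact mul_pos hl hs
    have hb : ∀ x : ℝ, |x| ≤ 1 → |Real.sinh x - (x + 1 * x ^ 3 / 6)| ≤ |x| ^ 4 * (5/96) := by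
      intro x hx; simpa using aux_sinh_bound hx
    have H1 := (aux_core Real.sinh 1 t ht0 ht1 hb).comp hφ
    have H2 := aux_tendsto_div_sinh.comp hφ
    have T := (H1.mul H2).mul_const (-Λ)
    have hval : 1 * (t^3 - t) / 6 * 1 * (-Λ) = t * (1 - t ^ 2) * Λ / 6 := by ring
    rw [hval] at T
    refine T.congr' ?_
    filter_upwards [self_mem_nhdsWithin] with l hl
    have hl0 : (0:ℝ) < l := hl
    have hls : 0 < l * s := mul_pos hl0 hs
    have hsinh : 0 < Real.sinh (l * s) := Real.sinh_pos_iff.mpr hls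
    have hσ : sigmaCoeff Λ t l = Real.sinh (t * (l * s)) / Real.sinh (l * s) := by
      rw [sigmaCoeff, if_neg, if_neg]
      · exact not_lt.mpr (le_of_lt (mul_neg_of_neg_of_pos hΛ (pow_pos hl0 2)))
      · exact ne_of_lt (mul_neg_of_neg_of_pos hΛ (pow_pos hl0 2))
    rw [hσ]
    have hΛeq : Λ = -(s^2) := by linarith [hs2]
    rw [hΛeq]
    simp only [Function.comp_apply]
    field_simp
  · -- Λ = 0
    have : ∀ l : ℝ, sigmaCoeff 0 t l = t := fun l => by simp [sigmaCoeff]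
    simpa [this] using tendsto_const_nhds
  · -- Λ > 0
    set s := Real.sqrt Λ with hs_def
    have hs : 0 < s := Real.sqrt_pos.mpr hΛ
    have hs2 : s ^ 2 = Λ := Real.sq_sqrt hΛ.le
    have hφ : Tendsto (fun l : ℝ => l * s) (𝓝[>] 0) (𝓝[>] 0) := by
      apply tendsto_nhdsWithin_of_tendsto_nhds_of_eventually_within
      · have : Tendsto (fun l : ℝ => l * s) (𝓝 0) (𝓝 (0 * s)) :=
          (continuous_id.mul continuous_const).tendsto 0
        simpa using this.mono_left nhdsWithin_le_nhds
      · filter_upwards [self_mem_nhdsWithin] with l hl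
        exact mul_pos hl hs
    have hb : ∀ x : ℝ, |x| ≤ 1 → |Real.sin x - (x + (-1) * x ^ 3 / 6)| ≤ |x| ^ 4 * (5/96) := by
      intro x hx
      have := Real.sin_bound hx
      have hee : x + (-1) * x ^ 3 / 6 = x - x ^ 3 / 6 := by ring
      rw [hee]
      refine this.trans ?_
      have h4 := pow_nonneg (abs_nonneg x) 4
      have h5 : |x| ^ 5 = |x| ^ 4 * |x| := by ring
      nlinarith [mul_le_mul_of_nonneg_left hx h4]
    have H1 := (aux_core Real.sin (-1) t ht0 ht1 hb).comp hφ
    have H2 := aux_tendsto_div_sin.comp hφ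
    have T := (H1.mul H2).mul_const Λ
    have hval : (-1) * (t^3 - t) / 6 * 1 * Λ = t * (1 - t ^ 2) * Λ / 6 := by ring
    rw [hval] at T
    refine T.congr' ?_
    filter_upwards [Ioo_mem_nhdsGT_of_mem (Set.left_mem_Ico.mpr (div_pos Real.pi_pos hs))]
      with l hl
    obtain ⟨hl0, hlπ⟩ := hl
    have hls : 0 < l * s := mul_pos hl0 hs
    have hlsπ : l * s < Real.pi := (lt_div_iff₀ hs).mp hlπ
    have hsin : 0 < Real.sin (l * s) := Real.sin_pos_of_pos_of_lt_pi hls hlsπ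
    have hσ : sigmaCoeff Λ t l = Real.sin (t * (l * s)) / Real.sin (l * s) := by
      rw [sigmaCoeff, if_neg, if_pos]
      · exact mul_pos hΛ (pow_pos hl0 2)
      · exact ne_of_gt (mul_pos hΛ (pow_pos hl0 2))
    rw [hσ]
    rw [← hs2]
    simp only [Function.comp_apply]
    field_simp

theorem stmt_5 (K N t : ℝ) (hN : 1 < N) (ht : t ∈ Set.Icc (0 : ℝ) 1) :
    Filter.Tendsto
      (fun l : ℝ =>
        (tauCoeff K N t l - t - t * (1 - t ^ 2) * (K / (6 * N)) * l ^ 2) / l ^ 2)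
      (nhdsWithin 0 (Set.Ioi 0)) (nhds 0) := by
  have hN0 : N ≠ 0 := by positivity
  have hN1 : N - 1 ≠ 0 := sub_ne_zero.mpr (by intro h; rw [h] at hN; exact lt_irrefl 1 hN)
  obtain rfl | ht0' := ht.1.eq_or_lt
  · -- t = 0
    have hs0 : ∀ l : ℝ, sigmaCoeff (K / (N - 1)) 0 l = 0 := fun l => by simp [sigmaCoeff]
    have hτ : ∀ l : ℝ, tauCoeff K N 0 l = 0 := fun l => by
      rw [tauCoeff, hs0, Real.zero_rpow (one_div_ne_zero hN0), zero_mul]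
    simpa [hτ] using (tendsto_const_nhds : Tendsto (fun _ : ℝ => (0:ℝ)) (𝓝[>] 0) (𝓝 0))
  · -- 0 < t
    set Λ := K / (N - 1) with hΛ_def
    set σ := fun l : ℝ => sigmaCoeff Λ t l with hσ_def
    set p : ℝ := 1 - 1 / N with hp_def
    set m : ℝ := t * (1 - t ^ 2) * Λ / 6 with hm_def
    set c : ℝ := t * (1 - t ^ 2) * (K / (6 * N)) with hc_def
    have hσlim : Tendsto (fun l : ℝ => (σ l - t) / l ^ 2) (𝓝[>] 0) (𝓝 m) :=
      aux_sigma Λ t ht.1 ht.2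
    have hl2 : ∀ᶠ l : ℝ in 𝓝[>] 0, (l:ℝ) ^ 2 ≠ 0 := by
      filter_upwards [self_mem_nhdsWithin] with l hl
      exact pow_ne_zero 2 (ne_of_gt hl)
    -- σ tends to t
    have hσt : Tendsto σ (𝓝[>] 0) (𝓝 t) := by
      have hsq : Tendsto (fun l : ℝ => l ^ 2) (𝓝[>] 0) (𝓝 0) := by
        have : Tendsto (fun l : ℝ => l ^ 2) (𝓝 0) (𝓝 ((0:ℝ) ^ 2)) :=
          (continuous_pow 2).tendsto 0
        simpa using this.mono_left nhdsWithin_le_nhds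
      have h := (hσlim.mul hsq).add_const t
      rw [mul_zero, zero_add] at h
      refine h.congr' ?_
      filter_upwards [hl2] with l hl
      rw [div_mul_cancel₀ _ hl]; ring
    -- derivative of x ↦ t^{1/N} x^p at t
    have hrp : HasDerivAt (fun x : ℝ => x ^ p) (p * t ^ (p - 1)) t :=
      Real.hasDerivAt_rpow_const (Or.inl (ne_of_gt ht0'))
    have hg : HasDerivAt (fun x : ℝ => t ^ (1/N) * x ^ p) (t ^ (1/N) * (p * t ^ (p - 1))) t :=
      hrp.const_mul _
    have hval : t ^ (1/N) * (p * t ^ (p - 1)) = p := by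
      have hexp : (1:ℝ)/N + (p - 1) = 0 := by rw [hp_def]; ring
      calc t ^ (1/N) * (p * t ^ (p - 1)) = p * (t ^ ((1:ℝ)/N) * t ^ (p - 1)) := by ring
        _ = p * t ^ ((1:ℝ)/N + (p - 1)) := by rw [Real.rpow_add ht0']
        _ = p := by rw [hexp, Real.rpow_zero, mul_one]
    rw [hval] at hg
    have hgt : t ^ (1/N) * t ^ p = t := by
      rw [← Real.rpow_add ht0']
      have : (1:ℝ)/N + p = 1 := by rw [hp_def]; ring
      rw [this, Real.rpow_one]
    -- little-o
    have hLO := hasDerivAt_iff_isLittleO.mp hg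
    have hcomp := hLO.comp_tendsto hσt
    have hBig : (fun l : ℝ => σ l - t) =O[𝓝[>] 0] (fun l : ℝ => l ^ 2) := by
      have h1 : (fun l : ℝ => (σ l - t) / l ^ 2) =O[𝓝[>] 0] (fun _ : ℝ => (1:ℝ)) :=
        hσlim.isBigO_one ℝ
      have h2 := h1.mul (isBigO_refl (fun l : ℝ => l ^ 2) (𝓝[>] 0))
      refine (h2.congr' ?_ ?_ : _)
      · filter_upwards [hl2] with l hl
        exact div_mul_cancel₀ _ hl
      · filter_upwards with l
        simp
    have ho := hcomp.trans_isBigO hBig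
    have htend0 := ho.tendsto_div_nhds_zero
    -- combine
    have hT := (htend0.add (hσlim.const_mul p)).sub_const c
    have hlim0 : (0:ℝ) + p * m - c = 0 := by
      rw [hp_def, hm_def, hc_def, hΛ_def]
      field_simp
      ring
    rw [hlim0] at hT
    refine hT.congr' ?_
    filter_upwards [self_mem_nhdsWithin] with l hl
    have hl0 : (0:ℝ) < l := hl
    have hl2' : (l:ℝ) ^ 2 ≠ 0 := pow_ne_zero 2 (ne_of_gt hl0)
    have hτ : tauCoeff K N t l = t ^ (1/N) * (σ l) ^ p := rfl
    show (t ^ (1/N) * (σ l) ^ p - (t ^ (1/N) * t ^ p) - (σ l - t) • p) / l ^ 2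
        + p * ((σ l - t) / l ^ 2) - c
      = (tauCoeff K N t l - t - c * l ^ 2) / l ^ 2
    rw [hτ, hgt, smul_eq_mul]
    field_simp
    ring
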